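/- Let 𝒜 ⊆ ℓ∞, let g : 𝒜 → ℓ∞ be Uniformly Asymptotically Non-Anticipatory (UANA), let u ∈ 𝒜, and suppose there is M > 0 with ‖g(x^T(u,v))‖_∞ ≤ M for all T ∈ ℕ and all v ∈ B_T(u). Then for every λ ∈ ℓ¹, lim_{T→∞} sup_{v∈B_T(u)} |⟨λ, g(x^T(u,v))⟩ − ⟨λ, g(u)⟩| = 0; that is, for every ε > 0 there exists T̄ such that for all T ≥ T̄ and all v ∈ B_T(u), |⟨λ, g(x^T(u,v))⟩ − ⟨λ, g(u)⟩| ≤ ε. -/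

import Mathlib

open scoped ENNReal

/-- The sequence `x^T(u,v)` equal to `u_t` for `t ≤ T` and to `v_t` for `t > T`,
as an element of `ℓ∞`. -/
noncomputable def splice (u v : lp (fun _ : ℕ => ℝ) ∞) (T : ℕ) : lp (fun _ : ℕ => ℝ) ∞ :=
  ⟨fun t => if t ≤ T then u t else v t, by
    apply memℓp_infty
    refine ⟨max ‖u‖ ‖v‖, ?_⟩
    rintro r ⟨t, rfl⟩
    dsimp only
    split_ifs
    · exact le_max_of_le_left (lp.norm_apply_le_norm ENNReal.top_ne_zero u t)
    · exact le_max_of_le_right (lp.norm_apply_le_norm ENNReal.top_ne_zero v t)⟩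

/-- Given `𝒜 ⊆ ℓ∞` and `u`, the set `B_T(u) = {v ∈ ℓ∞ : x^T(u,v) ∈ 𝒜}`. -/
def BT (A : Set (lp (fun _ : ℕ => ℝ) ∞)) (u : lp (fun _ : ℕ => ℝ) ∞) (T : ℕ) :
    Set (lp (fun _ : ℕ => ℝ) ∞) :=
  {v | splice u v T ∈ A}

/-- `g : 𝒜 → ℓ∞` is Uniformly Asymptotically Non-Anticipatory:
for every coordinate `t` and every `u ∈ 𝒜`,
`lim_{T→∞} sup_{v ∈ B_T(u)} |g_t(x^T(u,v)) − g_t(u)| = 0`. -/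
def UANA (A : Set (lp (fun _ : ℕ => ℝ) ∞))
    (g : lp (fun _ : ℕ => ℝ) ∞ → lp (fun _ : ℕ => ℝ) ∞) : Prop :=
  ∀ t : ℕ, ∀ u ∈ A, ∀ ε > (0 : ℝ), ∃ Tbar : ℕ, ∀ T ≥ Tbar, ∀ v ∈ BT A u T,
    |g (splice u v T) t - g u t| ≤ ε


lemma splice_self (u : lp (fun _ : ℕ => ℝ) ∞) (T : ℕ) : splice u u T = u := by
  apply Subtype.ext
  funext t
  show (if t ≤ T then u t else u t) = u t
  simp

lemma mem_BT_self (A : Set (lp (fun _ : ℕ => ℝ) ∞)) (u : lp (fun _ : ℕ => ℝ) ∞)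
    (hu : u ∈ A) (T : ℕ) : u ∈ BT A u T := by
  simp only [BT, Set.mem_setOf_eq, splice_self]; exact hu

/-- If `g : 𝒜 → ℓ∞` is UANA, `u ∈ 𝒜`, and `‖g(x^T(u,v))‖∞ ≤ M`
uniformly over `T ∈ ℕ` and `v ∈ B_T(u)`, then for every `λ ∈ ℓ¹`,
`lim_{T→∞} sup_{v ∈ B_T(u)} |⟨λ, g(x^T(u,v))⟩ − ⟨λ, g(u)⟩| = 0`, i.e. for every `ε > 0`
there is `T̄` with `|⟨λ, g(x^T(u,v))⟩ − ⟨λ, g(u)⟩| ≤ ε` for all `T ≥ T̄`, `v ∈ B_T(u)`. -/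
theorem stmt6 (A : Set (lp (fun _ : ℕ => ℝ) ∞))
    (g : lp (fun _ : ℕ => ℝ) ∞ → lp (fun _ : ℕ => ℝ) ∞)
    (hg : UANA A g)
    (u : lp (fun _ : ℕ => ℝ) ∞) (hu : u ∈ A)
    (M : ℝ) (hM : 0 < M)
    (hbdd : ∀ T : ℕ, ∀ v ∈ BT A u T, ‖g (splice u v T)‖ ≤ M)
    (lam : lp (fun _ : ℕ => ℝ) 1) :
    ∀ ε > (0 : ℝ), ∃ Tbar : ℕ, ∀ T ≥ Tbar, ∀ v ∈ BT A u T,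
      |(∑' t, lam t * g (splice u v T) t) - ∑' t, lam t * g u t| ≤ ε := by
  intro ε hε
  have hφ : Summable (fun t => ‖lam t‖) := by
    have h := (lp.memℓp lam).summable (by norm_num : 0 < (1 : ℝ≥0∞).toReal)
    simpa using h
  set S := ∑' t, ‖lam t‖ with hSdef
  have hS0 : 0 ≤ S := tsum_nonneg fun _ => norm_nonneg _
  set ε' : ℝ := ε / (2 * (S + 1)) with hε'def
  have hε' : 0 < ε' := by positivity
  -- choose a finset with small tail
  have htail := (tendsto_order.1
    (tendsto_tsum_compl_atTop_zero (fun t => ‖lam t‖))).2 (ε / (4 * M)) (by positivity)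
  obtain ⟨s0, hs0⟩ := Filter.eventually_atTop.mp htail
  have hs0' : (∑' t : {x : ℕ // x ∉ s0}, ‖lam t‖) < ε / (4 * M) := hs0 s0 le_rfl
  -- choose thresholds for each coordinate
  have H : ∀ t : ℕ, ∃ Tt : ℕ, ∀ T ≥ Tt, ∀ v ∈ BT A u T,
      |g (splice u v T) t - g u t| ≤ ε' := fun t => hg t u hu ε' hε'
  choose Tt hTt using H
  refine ⟨s0.sup Tt, fun T hT v hv => ?_⟩
  have huB : u ∈ BT A u T := mem_BT_self A u hu T
  have hgu : ‖g u‖ ≤ M := by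
    have := hbdd T u huB
    rwa [splice_self] at this
  have hgv : ‖g (splice u v T)‖ ≤ M := hbdd T v hv
  set a : ℕ → ℝ := fun t => lam t * g (splice u v T) t with hadef
  set b : ℕ → ℝ := fun t => lam t * g u t with hbdef
  have habound : ∀ (w : lp (fun _ : ℕ => ℝ) ∞), ‖w‖ ≤ M →
      Summable (fun t => lam t * w t) := by
    intro w hw
    apply Summable.of_norm
    refine Summable.of_nonneg_of_le (fun t => norm_nonneg _) (fun t => ?_) (hφ.mul_right M)
    rw [norm_mul]
    exact mul_le_mul_of_nonneg_left
      (le_trans (lp.norm_apply_le_norm ENNReal.top_ne_zero w t) hw) (norm_nonneg _)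
  have ha : Summable a := habound _ hgv
  have hb : Summable b := habound _ hgu
  have hd : Summable (fun t => ‖a t - b t‖) := summable_norm_iff.mpr (ha.sub hb)
  have step1 : (∑' t, a t) - (∑' t, b t) = ∑' t, (a t - b t) := (Summable.tsum_sub ha hb).symm
  rw [step1]
  have step2 : |∑' t, (a t - b t)| ≤ ∑' t, ‖a t - b t‖ := by
    rw [← Real.norm_eq_abs]
    exact norm_tsum_le_tsum_norm hd
  refine le_trans step2 ?_
  rw [← Summable.sum_add_tsum_subtype_compl hd s0]
  have hcoord : ∀ t : ℕ, ‖a t - b t‖ = ‖lam t‖ * |g (splice u v T) t - g u t| := by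
    intro t
    rw [hadef, hbdef]
    show ‖lam t * g (splice u v T) t - lam t * g u t‖ = _
    rw [← mul_sub, norm_mul, Real.norm_eq_abs (g (splice u v T) t - g u t)]
  -- head bound
  have hhead : ∑ t ∈ s0, ‖a t - b t‖ ≤ ε / 2 := by
    have h1 : ∑ t ∈ s0, ‖a t - b t‖ ≤ ∑ t ∈ s0, ‖lam t‖ * ε' := by
      refine Finset.sum_le_sum fun t ht => ?_
      rw [hcoord t]
      refine mul_le_mul_of_nonneg_left ?_ (norm_nonneg _)
      exact hTt t T (le_trans (Finset.le_sup ht) hT) v hv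
    have h2 : ∑ t ∈ s0, ‖lam t‖ * ε' = (∑ t ∈ s0, ‖lam t‖) * ε' := by
      rw [Finset.sum_mul]
    have h3 : (∑ t ∈ s0, ‖lam t‖) ≤ S :=
      Summable.sum_le_tsum s0 (fun t _ => norm_nonneg _) hφ
    have h4 : (∑ t ∈ s0, ‖lam t‖) * ε' ≤ S * ε' :=
      mul_le_mul_of_nonneg_right h3 hε'.le
    have h5 : S * ε' ≤ ε / 2 := by
      rw [hε'def]
      rw [mul_div_assoc']
      rw [div_le_div_iff₀ (by positivity) (by norm_num)]
      nlinarith [hS0, hε.le]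
    linarith [h1, h2 ▸ h1, h4, h5]
  -- tail bound
  have htailb : (∑' t : {x : ℕ // x ∉ s0}, ‖a t - b t‖) ≤ ε / 2 := by
    have h1 : (∑' t : {x : ℕ // x ∉ s0}, ‖a t - b t‖)
        ≤ ∑' t : {x : ℕ // x ∉ s0}, ‖lam t‖ * (2 * M) := by
      refine Summable.tsum_le_tsum (fun t => ?_) (hd.subtype _) ((hφ.mul_right (2 * M)).subtype _)
      rw [hcoord t]
      refine mul_le_mul_of_nonneg_left ?_ (norm_nonneg _)
      have e1 : |g (splice u v T) (t : ℕ)| ≤ M :=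
        le_trans (lp.norm_apply_le_norm ENNReal.top_ne_zero (g (splice u v T)) t) hgv
      have e2 : |g u (t : ℕ)| ≤ M :=
        le_trans (lp.norm_apply_le_norm ENNReal.top_ne_zero (g u) t) hgu
      calc |g (splice u v T) (t : ℕ) - g u t|
          ≤ |g (splice u v T) (t : ℕ)| + |g u (t : ℕ)| := abs_sub _ _
        _ ≤ 2 * M := by linarith
    have h2 : (∑' t : {x : ℕ // x ∉ s0}, ‖lam t‖ * (2 * M))
        = (∑' t : {x : ℕ // x ∉ s0}, ‖lam (t : ℕ)‖) * (2 * M) := tsum_mul_right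
    have h3 : (∑' t : {x : ℕ // x ∉ s0}, ‖lam (t : ℕ)‖) * (2 * M) ≤ (ε / (4 * M)) * (2 * M) :=
      mul_le_mul_of_nonneg_right hs0'.le (by positivity)
    have h4 : (ε / (4 * M)) * (2 * M) = ε / 2 := by
      field_simp
      ring
    linarith [h1, h2 ▸ h1, h3]
  linarith [hhead, htailb]
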